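/- Let X be a Banach space of type p ∈ [1,2] and let T be an absolutely Cesàro bounded operator on X. Then ‖T^n‖ = O(n^{1/p}). -/

import Mathlib

open MeasureTheory Filter Asymptotics Finset

/-- The sign `±1` attached to a Boolean. -/
def rsign (b : Bool) : ℝ := if b then 1 else -1

/-- `X` has (Rademacher) type `p`: the expectation over all sign patterns of
`‖∑ εᵢ xᵢ‖^p` is at most `K` times `∑ ‖xᵢ‖^p`. -/
def HasTypeP (X : Type) [NormedAddCommGroup X] [NormedSpace ℝ X] (p : ℝ) : Prop :=
  ∃ K : ℝ, 0 < K ∧ ∀ n : ℕ, ∀ x : Fin n → X,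
    ∑ ε : Fin n → Bool, ‖∑ i, rsign (ε i) • x i‖ ^ p ≤
      2 ^ n * K * ∑ i, ‖x i‖ ^ p

/-- `T` is absolutely Cesàro bounded with constant `C`. -/
def AbsCesaroBounded {X : Type} [NormedAddCommGroup X] [NormedSpace ℂ X]
    (T : X →L[ℂ] X) (C : ℝ) : Prop :=
  0 < C ∧ ∀ n : ℕ, 1 ≤ n → ∀ x : X,
    ∑ k ∈ Finset.range n, ‖(T ^ k) x‖ ≤ C * n * ‖x‖


lemma rsign_mul_self (b : Bool) : rsign b * rsign b = 1 := by cases b <;> simp [rsign]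

lemma rsign_not (b : Bool) : rsign (!b) = - rsign b := by cases b <;> simp [rsign]

lemma norm_rsign (b : Bool) : ‖rsign b‖ = 1 := by cases b <;> simp [rsign]

lemma rsign_orth {N : ℕ} (i k : Fin N) :
    ∑ ε : Fin N → Bool, rsign (ε i) * rsign (ε k) =
      if i = k then (2 : ℝ) ^ N else 0 := by
  rcases eq_or_ne i k with rfl | h
  · simp only [if_pos rfl]
    rw [Finset.sum_congr rfl (fun ε _ => rsign_mul_self (ε i))]
    simp [Finset.card_univ]
  · rw [if_neg h]
    set σ : (Fin N → Bool) → (Fin N → Bool) := fun ε => Function.update ε i (!ε i) with hσdef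
    have hσ : Function.Involutive σ := by
      intro ε; funext j
      rcases eq_or_ne j i with rfl | hj
      · simp [σ]
      · simp [σ, Function.update_of_ne hj]
    have hsum : ∑ ε : Fin N → Bool, rsign (ε i) * rsign (ε k) =
        ∑ ε : Fin N → Bool, rsign (σ ε i) * rsign (σ ε k) :=
      (Equiv.sum_comp hσ.toPerm (fun ε => rsign (ε i) * rsign (ε k))).symm
    have hneg : ∀ ε : Fin N → Bool, rsign (σ ε i) * rsign (σ ε k)
        = -(rsign (ε i) * rsign (ε k)) := by
      intro ε
      have h1 : σ ε i = !ε i := Function.update_self _ _ _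
      have h2 : σ ε k = ε k := Function.update_of_ne (Ne.symm h) _ _
      rw [h1, h2, rsign_not]; ring
    rw [Finset.sum_congr rfl (fun ε _ => hneg ε), Finset.sum_neg_distrib] at hsum
    linarith

section KeyAux
variable {X : Type} [NormedAddCommGroup X] [NormedSpace ℂ X]

private lemma stepB (T : X →L[ℂ] X) (N : ℕ) (v : Fin N → X) (j : ℕ) (i : Fin N) :
    ((2:ℝ)^N) • ((T ^ j) (v i)) =
      ∑ ε : Fin N → Bool, rsign (ε i) • ((T ^ j) (∑ k, rsign (ε k) • v k)) := by
  have h1 : ∀ ε : Fin N → Bool, rsign (ε i) • ((T ^ j) (∑ k, rsign (ε k) • v k)) =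
      ∑ k, (rsign (ε i) * rsign (ε k)) • ((T ^ j) (v k)) := by
    intro ε
    rw [map_sum, Finset.smul_sum]
    refine Finset.sum_congr rfl fun k _ => ?_
    rw [ContinuousLinearMap.map_smul_of_tower, smul_smul]
  refine Eq.symm ?_
  calc ∑ ε : Fin N → Bool, rsign (ε i) • ((T ^ j) (∑ k, rsign (ε k) • v k))
      = ∑ ε : Fin N → Bool, ∑ k, (rsign (ε i) * rsign (ε k)) • ((T ^ j) (v k)) :=
        Finset.sum_congr rfl fun ε _ => h1 ε
    _ = ∑ k, (∑ ε : Fin N → Bool, rsign (ε i) * rsign (ε k)) • ((T ^ j) (v k)) := by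
        rw [Finset.sum_comm]
        exact Finset.sum_congr rfl fun k _ => (Finset.sum_smul).symm
    _ = ((2:ℝ)^N) • ((T ^ j) (v i)) := by
        simp only [rsign_orth, ite_smul, zero_smul]
        rw [Finset.sum_ite_eq]
        simp
private lemma key (p : ℝ) (hp1 : 1 ≤ p) (K : ℝ) (hK : 0 < K)
    (hty : ∀ n : ℕ, ∀ x : Fin n → X,
      ∑ ε : Fin n → Bool, ‖∑ i, rsign (ε i) • x i‖ ^ p ≤ 2 ^ n * K * ∑ i, ‖x i‖ ^ p)
    (T : X →L[ℂ] X) (C₀ : ℝ) (hC : 0 < C₀)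
    (hT : ∀ n : ℕ, 1 ≤ n → ∀ x : X, ∑ k ∈ Finset.range n, ‖(T ^ k) x‖ ≤ C₀ * n * ‖x‖)
    (n : ℕ) (x : X) :
    ‖(T ^ n) x‖ ≤ C₀ ^ 2 * K ^ (1/p) * ((n + 1 : ℕ) : ℝ) ^ (1/p) * ‖x‖ := by
  have hp0 : 0 < p := lt_of_lt_of_le one_pos hp1
  by_cases hzero : ∃ i, i ≤ n ∧ (T ^ i) x = 0
  · obtain ⟨i, hi, h0⟩ := hzero
    have hTn : (T ^ n) x = 0 := by
      have hpow : T ^ n = T ^ (n - i) * T ^ i := by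
        rw [← pow_add]; congr 1; omega
      rw [hpow, ContinuousLinearMap.mul_apply, h0, map_zero]
    rw [hTn, norm_zero]
    have h1 : (0:ℝ) ≤ K ^ (1/p) := Real.rpow_nonneg hK.le _
    have h2 : (0:ℝ) ≤ ((n + 1 : ℕ) : ℝ) ^ (1/p) := Real.rpow_nonneg (by positivity) _
    positivity
  · push_neg at hzero
    set N : ℕ := n + 1 with hN
    set a : ℕ → ℝ := fun i => ‖(T ^ i) x‖ with ha
    have hapos : ∀ i, i ≤ n → 0 < a i := fun i hi => norm_pos_iff.mpr (hzero i hi)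
    have hx : 0 < ‖x‖ := by
      have := hapos 0 (Nat.zero_le _); simpa [a] using this
    set v : Fin N → X := fun i => (a (i:ℕ))⁻¹ • ((T ^ (i:ℕ)) x) with hv
    -- each v has norm 1
    have hvnorm : ∀ i : Fin N, ‖v i‖ = 1 := by
      intro i
      have hi : (i:ℕ) ≤ n := by omega
      have hpos := hapos _ hi
      rw [hv]
      simp only [norm_smul, norm_inv, Real.norm_eq_abs, abs_of_pos hpos]
      exact inv_mul_cancel₀ hpos.ne'
    -- Step C
    have stepC : ∀ j : Fin N,
        (2:ℝ)^N * ((a (n - (j:ℕ)))⁻¹ * a n) ≤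
          ∑ ε : Fin N → Bool, ‖(T ^ (j:ℕ)) (∑ k, rsign (ε k) • v k)‖ := by
      intro j
      have hj : (j:ℕ) ≤ n := by omega
      set i : Fin N := ⟨n - (j:ℕ), by omega⟩ with hi
      have hvi : (T ^ (j:ℕ)) (v i) = (a (n - (j:ℕ)))⁻¹ • ((T ^ n) x) := by
        rw [hv]
        simp only [ContinuousLinearMap.map_smul_of_tower]
        congr 1
        rw [← ContinuousLinearMap.mul_apply, ← pow_add]
        congr 2
        have hival : (i:ℕ) = n - (j:ℕ) := rfl
        omega
      have hB := stepB T N v (j:ℕ) i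
      have hnorm : ‖((2:ℝ)^N) • ((T ^ (j:ℕ)) (v i))‖ =
          (2:ℝ)^N * ((a (n - (j:ℕ)))⁻¹ * a n) := by
        rw [hvi, norm_smul, norm_smul, norm_inv, Real.norm_eq_abs, Real.norm_eq_abs,
          abs_of_pos (hapos _ (by omega)), abs_of_pos (by positivity : (0:ℝ) < (2:ℝ)^N)]
      calc (2:ℝ)^N * ((a (n - (j:ℕ)))⁻¹ * a n)
          = ‖((2:ℝ)^N) • ((T ^ (j:ℕ)) (v i))‖ := hnorm.symm
        _ = ‖∑ ε : Fin N → Bool, rsign (ε i) • ((T ^ (j:ℕ)) (∑ k, rsign (ε k) • v k))‖ := by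
            rw [hB]
        _ ≤ ∑ ε : Fin N → Bool, ‖rsign (ε i) • ((T ^ (j:ℕ)) (∑ k, rsign (ε k) • v k))‖ :=
            norm_sum_le _ _
        _ = ∑ ε : Fin N → Bool, ‖(T ^ (j:ℕ)) (∑ k, rsign (ε k) • v k)‖ := by
            refine Finset.sum_congr rfl fun ε _ => ?_
            rw [norm_smul, norm_rsign, one_mul]
    -- abbreviations
    set Sc : ℝ := ∑ i ∈ Finset.range N, (a i)⁻¹ with hSc
    set Sz : ℝ := ∑ ε : Fin N → Bool, ‖∑ k, rsign (ε k) • v k‖ with hSz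
    have hScnn : 0 ≤ Sc := Finset.sum_nonneg fun i _ => inv_nonneg.mpr (norm_nonneg _)
    have hSznn : 0 ≤ Sz := Finset.sum_nonneg fun ε _ => norm_nonneg _
    have hNpos : (0:ℝ) < (N:ℝ) := by positivity
    -- reflection
    have reflect : ∑ j ∈ Finset.range N, (a (n - j))⁻¹ = Sc := by
      have h := Finset.sum_range_reflect (fun i => (a i)⁻¹) N
      rw [hSc, ← h]
      refine Finset.sum_congr rfl fun j hj => ?_
      have hnj : N - 1 - j = n - j := by omega
      rw [hnj]
    -- Step D
    have stepD : (2:ℝ)^N * a n * Sc ≤ C₀ * N * Sz := by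
      calc (2:ℝ)^N * a n * Sc
          = ∑ j ∈ Finset.range N, (2:ℝ)^N * ((a (n - j))⁻¹ * a n) := by
            rw [← reflect, Finset.mul_sum]
            exact Finset.sum_congr rfl fun j _ => by ring
        _ ≤ ∑ j ∈ Finset.range N, ∑ ε : Fin N → Bool,
              ‖(T ^ j) (∑ k, rsign (ε k) • v k)‖ := by
            refine Finset.sum_le_sum fun j hj => ?_
            exact stepC ⟨j, Finset.mem_range.mp hj⟩
        _ = ∑ ε : Fin N → Bool, ∑ j ∈ Finset.range N,
              ‖(T ^ j) (∑ k, rsign (ε k) • v k)‖ := Finset.sum_comm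
        _ ≤ ∑ ε : Fin N → Bool, C₀ * N * ‖∑ k, rsign (ε k) • v k‖ :=
            Finset.sum_le_sum fun ε _ => hT N (by omega) _
        _ = C₀ * N * Sz := by rw [hSz, Finset.mul_sum]
    -- Step E
    have hcard : ((Finset.univ : Finset (Fin N → Bool)).card : ℝ) = (2:ℝ)^N := by
      simp [Finset.card_univ]
    have htyapp : ∑ ε : Fin N → Bool, ‖∑ k, rsign (ε k) • v k‖ ^ p ≤ (2:ℝ)^N * K * N := by
      have h := hty N v
      have hs : ∑ i : Fin N, ‖v i‖ ^ p = (N:ℝ) := by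
        simp [hvnorm, Real.one_rpow]
      rw [hs] at h
      exact h
    have hPM : Sz ^ p ≤ ((2:ℝ)^N) ^ (p - 1) * ∑ ε : Fin N → Bool,
        ‖∑ k, rsign (ε k) • v k‖ ^ p := by
      have h := Real.rpow_sum_le_const_mul_sum_rpow_of_nonneg
        (Finset.univ : Finset (Fin N → Bool))
        (f := fun ε => ‖∑ k, rsign (ε k) • v k‖) hp1 (fun ε _ => norm_nonneg _)
      rw [hcard] at h
      exact h
    have hSzp : Sz ^ p ≤ (((2:ℝ)^N) ^ p) * (K * N) := by
      have h2 : ((2:ℝ)^N) ^ (p - 1) * ((2:ℝ)^N * K * N) = (((2:ℝ)^N) ^ p) * (K * N) := by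
        have hb : (0:ℝ) < (2:ℝ)^N := by positivity
        have : ((2:ℝ)^N) ^ (p - 1) * ((2:ℝ)^N) ^ (1:ℝ) = ((2:ℝ)^N) ^ p := by
          rw [← Real.rpow_add hb, sub_add_cancel]
        rw [Real.rpow_one] at this
        calc ((2:ℝ)^N) ^ (p - 1) * ((2:ℝ)^N * K * N)
            = (((2:ℝ)^N) ^ (p - 1) * ((2:ℝ)^N)) * (K * N) := by ring
          _ = (((2:ℝ)^N) ^ p) * (K * N) := by rw [this]
      calc Sz ^ p ≤ ((2:ℝ)^N) ^ (p - 1) * ∑ ε : Fin N → Bool,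
            ‖∑ k, rsign (ε k) • v k‖ ^ p := hPM
        _ ≤ ((2:ℝ)^N) ^ (p - 1) * ((2:ℝ)^N * K * N) := by
            refine mul_le_mul_of_nonneg_left htyapp ?_
            exact Real.rpow_nonneg (by positivity) _
        _ = (((2:ℝ)^N) ^ p) * (K * N) := h2
    have stepE : Sz ≤ (2:ℝ)^N * (K * N) ^ (1/p) := by
      have hb : (0:ℝ) ≤ (2:ℝ)^N := by positivity
      have hKN : (0:ℝ) ≤ K * N := by positivity
      have h1 : (Sz ^ p) ^ (1/p) ≤ ((((2:ℝ)^N) ^ p) * (K * N)) ^ (1/p) :=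
        Real.rpow_le_rpow (Real.rpow_nonneg hSznn _) hSzp (by positivity)
      have h2 : (Sz ^ p) ^ (1/p) = Sz := by
        rw [← Real.rpow_mul hSznn, mul_one_div_cancel hp0.ne', Real.rpow_one]
      have h3 : ((((2:ℝ)^N) ^ p) * (K * N)) ^ (1/p)
          = (2:ℝ)^N * (K * N) ^ (1/p) := by
        rw [Real.mul_rpow (Real.rpow_nonneg hb _) hKN, ← Real.rpow_mul hb,
          mul_one_div_cancel hp0.ne', Real.rpow_one]
      rw [h2, h3] at h1
      exact h1
    -- Step F
    have hsa : ∑ i ∈ Finset.range N, a i ≤ C₀ * N * ‖x‖ := hT N (by omega) x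
    have hCS : ((N:ℝ)) ^ 2 ≤ (∑ i ∈ Finset.range N, a i) * Sc := by
      have h := Finset.sum_sq_le_sum_mul_sum_of_sq_eq_mul (Finset.range N)
        (r := fun _ => (1:ℝ)) (f := a) (g := fun i => (a i)⁻¹)
        (fun i _ => norm_nonneg _) (fun i _ => inv_nonneg.mpr (norm_nonneg _))
        (fun i hi => by
          rw [one_pow, mul_inv_cancel₀ (hapos i (by
            have := Finset.mem_range.mp hi; omega)).ne'])
      simpa using h
    have stepF : ((N:ℝ)) ^ 2 ≤ (C₀ * N * ‖x‖) * Sc :=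
      hCS.trans (mul_le_mul_of_nonneg_right hsa hScnn)
    -- Combine
    set Q : ℝ := (K * N) ^ (1/p) with hQ
    have hQnn : 0 ≤ Q := Real.rpow_nonneg (by positivity) _
    have hcore : a n * Sc ≤ C₀ * N * Q := by
      have h3 : (2:ℝ)^N * (a n * Sc) ≤ (2:ℝ)^N * (C₀ * N * Q) := by
        calc (2:ℝ)^N * (a n * Sc) = (2:ℝ)^N * a n * Sc := by ring
          _ ≤ C₀ * N * Sz := stepD
          _ ≤ C₀ * N * ((2:ℝ)^N * Q) := by
              refine mul_le_mul_of_nonneg_left stepE ?_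
              positivity
          _ = (2:ℝ)^N * (C₀ * N * Q) := by ring
      exact le_of_mul_le_mul_left h3 (by positivity)
    have hfin : a n * (N:ℝ)^2 ≤ (C₀ ^ 2 * K ^ (1/p) * ((N:ℕ):ℝ) ^ (1/p) * ‖x‖) * (N:ℝ)^2 := by
      calc a n * (N:ℝ)^2
          ≤ a n * ((C₀ * N * ‖x‖) * Sc) :=
            mul_le_mul_of_nonneg_left stepF (norm_nonneg _)
        _ = (C₀ * N * ‖x‖) * (a n * Sc) := by ring
        _ ≤ (C₀ * N * ‖x‖) * (C₀ * N * Q) := by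
            refine mul_le_mul_of_nonneg_left hcore ?_
            positivity
        _ = (C₀ ^ 2 * K ^ (1/p) * ((N:ℕ):ℝ) ^ (1/p) * ‖x‖) * (N:ℝ)^2 := by
            rw [hQ, Real.mul_rpow hK.le (Nat.cast_nonneg _)]
            ring
    have := le_of_mul_le_mul_right hfin (by positivity : (0:ℝ) < (N:ℝ)^2)
    exact this

end KeyAux

theorem abs_cesaro_type_power_growth
    {X : Type} [NormedAddCommGroup X] [NormedSpace ℂ X]
    (p : ℝ) (hp1 : 1 ≤ p) (hp2 : p ≤ 2) (htype : HasTypeP X p)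
    (T : X →L[ℂ] X) (C₀ : ℝ) (hT : AbsCesaroBounded T C₀) :
    (fun n : ℕ => ‖T ^ n‖) =O[atTop] fun n : ℕ => (n : ℝ) ^ (1 / p) := by
  obtain ⟨K, hK, hty⟩ := htype
  obtain ⟨hC, hT'⟩ := hT
  have hp0 : 0 < p := lt_of_lt_of_le one_pos hp1
  have hKp : (0:ℝ) ≤ K ^ (1/p) := Real.rpow_nonneg hK.le _
  have h2p : (0:ℝ) ≤ (2:ℝ) ^ (1/p) := Real.rpow_nonneg (by norm_num) _
  rw [Asymptotics.isBigO_iff]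
  refine ⟨C₀ ^ 2 * K ^ (1/p) * 2 ^ (1/p), ?_⟩
  filter_upwards [Filter.eventually_ge_atTop 1] with n hn
  have hnp : (0:ℝ) ≤ ((n+1:ℕ):ℝ) ^ (1/p) := Real.rpow_nonneg (by positivity) _
  have hopn : ‖T ^ n‖ ≤ C₀ ^ 2 * K ^ (1/p) * ((n + 1 : ℕ) : ℝ) ^ (1/p) := by
    refine ContinuousLinearMap.opNorm_le_bound _ ?_ fun x =>
      key p hp1 K hK hty T C₀ hC hT' n x
    exact mul_nonneg (mul_nonneg (sq_nonneg _) hKp) hnp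
  have hmono : ((n + 1 : ℕ):ℝ) ^ (1/p) ≤ 2 ^ (1/p) * ((n:ℝ)) ^ (1/p) := by
    have h1 : ((n + 1 : ℕ):ℝ) ≤ 2 * (n:ℝ) := by
      have : (1:ℝ) ≤ (n:ℝ) := by exact_mod_cast hn
      push_cast
      linarith
    calc ((n + 1 : ℕ):ℝ) ^ (1/p) ≤ (2 * (n:ℝ)) ^ (1/p) :=
          Real.rpow_le_rpow (by positivity) h1 (by positivity)
      _ = 2 ^ (1/p) * ((n:ℝ)) ^ (1/p) := Real.mul_rpow (by norm_num) (by positivity)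
  calc ‖‖T ^ n‖‖ = ‖T ^ n‖ := by
        rw [Real.norm_eq_abs, abs_of_nonneg (norm_nonneg _)]
    _ ≤ C₀ ^ 2 * K ^ (1/p) * ((n + 1 : ℕ) : ℝ) ^ (1/p) := hopn
    _ ≤ C₀ ^ 2 * K ^ (1/p) * (2 ^ (1/p) * ((n:ℝ)) ^ (1/p)) := by
        refine mul_le_mul_of_nonneg_left hmono ?_
        exact mul_nonneg (sq_nonneg _) hKp
    _ = (C₀ ^ 2 * K ^ (1/p) * 2 ^ (1/p)) * ((n:ℝ)) ^ (1/p) := by ring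
    _ = (C₀ ^ 2 * K ^ (1/p) * 2 ^ (1/p)) * ‖((n:ℝ)) ^ (1/p)‖ := by
        rw [Real.norm_eq_abs, abs_of_nonneg (Real.rpow_nonneg (Nat.cast_nonneg _) _)]
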